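/- In the group algebra ℚ[ℂˣ], the identity ((1/676)Λ_{4435} − 1)((1/379)Λ_{4435} − 1)((1/266)Λ_{4435} − 1)((1/179)Λ_{4435} − 1) = 5Λ_{4435} + 1 holds. -/

import Mathlib

/-- `Λ n` : the element of the group algebra `ℚ[ℂˣ]` given by the sum of the
basis elements corresponding to the `n`-th roots of unity (junk value `0` for `n = 0`). -/
noncomputable def Lambda (n : ℕ) : MonoidAlgebra ℚ ℂˣ :=
  if h : n = 0 then 0 else
    haveI : NeZero n := ⟨h⟩
    haveI : Fintype (rootsOfUnity n ℂ) := Fintype.ofFinite _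
    ∑ ζ : rootsOfUnity n ℂ, MonoidAlgebra.single (ζ : ℂˣ) (1 : ℚ)

/-- `Λ n · Λ n = n Λ n`: multiplication reindexes the roots of unity. -/
lemma Lambda_sq (n : ℕ) [NeZero n] : Lambda n * Lambda n = (n : ℚ) • Lambda n := by
  have hn : n ≠ 0 := NeZero.ne n
  letI : Fintype (rootsOfUnity n ℂ) := Fintype.ofFinite _
  rw [Lambda, dif_neg hn]
  rw [Finset.sum_mul_sum]
  have h1 : ∀ ζ : rootsOfUnity n ℂ,
      ∑ η : rootsOfUnity n ℂ,
        MonoidAlgebra.single ((ζ : ℂˣ)) (1:ℚ) * MonoidAlgebra.single ((η : ℂˣ)) (1:ℚ)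
        = ∑ η : rootsOfUnity n ℂ, MonoidAlgebra.single ((η : ℂˣ)) (1:ℚ) := by
    intro ζ
    rw [Fintype.sum_equiv (Equiv.mulLeft ζ) _ _ ?_]
    intro η
    rw [MonoidAlgebra.single_mul_single, one_mul]
    rfl
  rw [Finset.sum_congr rfl (fun ζ _ => h1 ζ)]
  rw [Finset.sum_const, Finset.card_univ, ← Nat.card_eq_fintype_card, Complex.card_rootsOfUnity n]
  rw [← Nat.cast_smul_eq_nsmul ℚ]

theorem alexander_divisor_deg_4435 :
    ((1 / 676 : ℚ) • Lambda 4435 - 1) * ((1 / 379 : ℚ) • Lambda 4435 - 1)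
        * ((1 / 266 : ℚ) • Lambda 4435 - 1) * ((1 / 179 : ℚ) • Lambda 4435 - 1) =
      (5 : ℚ) • Lambda 4435 + 1 := by
  set L := Lambda 4435 with hL
  have h : L * L = (4435 : ℚ) • L := Lambda_sq 4435
  have step : ∀ a b c d : ℚ,
      (a • L + b • (1 : MonoidAlgebra ℚ ℂˣ)) * (c • L + d • 1)
        = (4435 * (a * c) + a * d + b * c) • L + (b * d) • (1 : MonoidAlgebra ℚ ℂˣ) := by
    intro a b c d
    rw [add_mul, mul_add, mul_add, smul_mul_smul_comm, smul_mul_smul_comm, smul_mul_smul_comm,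
      smul_mul_smul_comm, h, mul_one, one_mul, one_mul, smul_smul]
    module
  have e : ∀ a : ℚ, a • L - 1 = a • L + (-1 : ℚ) • (1 : MonoidAlgebra ℚ ℂˣ) := by
    intro a; module
  rw [e, e, e, e, step, step, step]
  norm_num
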